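/- If Γ is a connected simple graph on {1,...,n}, then the subgraph of η (the GKM graph of Q_{Γ,λ}) induced on vertices {(σ,s) ∈ S_n × (ℤ/2)^n : s_1 + ... + s_n = 0} is connected. -/

import Mathlib

/-- Adjacency in the GKM graph `η` of `Q_{Γ,λ}`: `(σ,s)` and `(τ,s')` are adjacent
iff there are `i < j` with `{i,j} ∈ E_Γ`, `τ = σ·(i j)`, `s` and `s'` agree outside
`{i,j}`, and `sᵢ + sⱼ = s'ᵢ + s'ⱼ` in `ℤ/2`. -/
def etaAdj {n : ℕ} (G : SimpleGraph (Fin n))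
    (v w : Equiv.Perm (Fin n) × (Fin n → ZMod 2)) : Prop :=
  ∃ i j : Fin n, i < j ∧ G.Adj i j ∧ w.1 = v.1 * Equiv.swap i j ∧
    (∀ k, k ≠ i → k ≠ j → w.2 k = v.2 k) ∧ w.2 i + w.2 j = v.2 i + v.2 j

namespace EtaAux

open Equiv SimpleGraph

variable {n : ℕ} (G : SimpleGraph (Fin n))

abbrev S (n : ℕ) : Set (Equiv.Perm (Fin n) × (Fin n → ZMod 2)) :=
  {v | ∑ k, v.2 k = 0}

abbrev H : SimpleGraph (S n) := (SimpleGraph.fromRel (etaAdj G)).induce (S n)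

lemma adjE {i j : Fin n} {σ : Equiv.Perm (Fin n)} {s t : Fin n → ZMod 2}
    {hs : (σ, s) ∈ S n}
    {ht : (σ * Equiv.swap i j, t) ∈ S n} (hij : G.Adj i j)
    (hout : ∀ k, k ≠ i → k ≠ j → t k = s k) (hsum : t i + t j = s i + s j) :
    (H G).Adj ⟨(σ, s), hs⟩ ⟨(σ * Equiv.swap i j, t), ht⟩ := by
  have hne : i ≠ j := hij.ne
  have hmain : etaAdj G (σ, s) (σ * Equiv.swap i j, t) := by
    rcases hne.lt_or_gt with h | h
    · exact ⟨i, j, h, hij, rfl, hout, hsum⟩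
    · refine ⟨j, i, h, hij.symm, by rw [Equiv.swap_comm], ?_, by rw [add_comm, hsum, add_comm]⟩
      exact fun k hk1 hk2 => hout k hk2 hk1
  have hvw : (σ, s) ≠ (σ * Equiv.swap i j, t) := by
    intro h
    have := congrArg Prod.fst h
    simp only at this
    exact hne (Equiv.mul_swap_eq_iff.mp this.symm)
  exact ⟨hvw, Or.inl hmain⟩

/-- flip coordinates `i` and `j` -/
def flip (i j : Fin n) (s : Fin n → ZMod 2) : Fin n → ZMod 2 :=
  s + Pi.single i 1 + Pi.single j 1

lemma two_eq_zero : (2 : ZMod 2) = 0 := rfl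

lemma sum_flip (i j : Fin n) (s : Fin n → ZMod 2) (hs : ∑ k, s k = 0) :
    ∑ k, flip i j s k = 0 := by
  simp [flip, Finset.sum_add_distrib, hs]
  norm_num
  exact CharTwo.add_self_eq_zero 1

lemma flip_flip (i j k : Fin n) (s : Fin n → ZMod 2) :
    flip j k (flip i j s) = flip i k s := by
  have hj : (Pi.single j 1 : Fin n → ZMod 2) + Pi.single j 1 = 0 := by
    funext x; exact CharTwo.add_self_eq_zero _
  simp only [flip, add_assoc]
  rw [← add_assoc (Pi.single j 1) (Pi.single j 1), hj, zero_add]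

lemma flip_self (i : Fin n) (s : Fin n → ZMod 2) : flip i i s = s := by
  funext x
  simp only [flip, Pi.add_apply, add_assoc]
  rw [CharTwo.add_self_eq_zero, add_zero]

/-- a single step keeping s, along an edge -/
lemma reach_edge (σ : Equiv.Perm (Fin n)) (s : Fin n → ZMod 2) (hs : (σ, s) ∈ S n)
    {i j : Fin n} (hij : G.Adj i j) (hs' : (σ * Equiv.swap i j, s) ∈ S n) :
    (H G).Reachable ⟨(σ, s), hs⟩ ⟨(σ * Equiv.swap i j, s), hs'⟩ :=
  (adjE G hij (fun _ _ _ => rfl) rfl).reachable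

/-- a single step flipping s at an edge -/
lemma reach_edge_flip (σ : Equiv.Perm (Fin n)) (s : Fin n → ZMod 2) (hs : (σ, s) ∈ S n)
    {i j : Fin n} (hij : G.Adj i j) (hs' : (σ * Equiv.swap i j, flip i j s) ∈ S n) :
    (H G).Reachable ⟨(σ, s), hs⟩ ⟨(σ * Equiv.swap i j, flip i j s), hs'⟩ := by
  refine (adjE G hij ?_ ?_).reachable
  · intro k hk1 hk2
    simp [flip, Pi.single_eq_of_ne hk1, Pi.single_eq_of_ne hk2]
  · have hne : i ≠ j := hij.ne
    simp [flip, Pi.single_eq_of_ne hne, Pi.single_eq_of_ne hne.symm]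
    ring_nf
    rw [two_eq_zero, zero_add]

/-- cast lemma -/
lemma reach_congr {σ τ : Equiv.Perm (Fin n)} {s t : Fin n → ZMod 2}
    (hst : σ = τ) (h : s = t) (hs : (σ, s) ∈ S n) (ht : (τ, t) ∈ S n) :
    (H G).Reachable ⟨(σ, s), hs⟩ ⟨(τ, t), ht⟩ := by
  subst hst; subst h; exact SimpleGraph.Reachable.refl _

/-- walk ⇒ reach (σ,s) to (σ * swap i j, s) -/
lemma reach_swap {i j : Fin n} (p : G.Walk i j) :
    ∀ (σ : Equiv.Perm (Fin n)) (s : Fin n → ZMod 2) (hs : (σ, s) ∈ S n)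
      (hs' : (σ * Equiv.swap i j, s) ∈ S n),
      (H G).Reachable ⟨(σ, s), hs⟩ ⟨(σ * Equiv.swap i j, s), hs'⟩ := by
  induction p with
  | nil =>
    intro σ s hs hs'
    exact (reach_congr G (by simp; rfl) rfl hs' hs).symm
  | @cons u v w h p ih =>
    intro σ s hs hs'
    by_cases hvw : v = w
    · subst hvw
      exact reach_edge G σ s hs h hs'
    · by_cases huw : u = w
      · subst huw
        have : (⟨(σ * Equiv.swap u u, s), hs'⟩ : S n) = ⟨(σ, s), hs⟩ := by
          apply Subtype.ext
          simp; rfl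
        rw [this]
      · have huv : u ≠ v := h.ne
        have key : Equiv.swap v w * Equiv.swap u v * Equiv.swap v w = Equiv.swap u w := by
          rw [Equiv.swap_mul_swap_mul_swap huv huw, Equiv.swap_comm]
        have r1 := ih σ s hs (hs : ∑ k, s k = 0)
        have r2 := reach_edge G (σ * Equiv.swap v w) s (hs : ∑ k, s k = 0) h
          (hs : ∑ k, s k = 0)
        have r3 := ih (σ * Equiv.swap v w * Equiv.swap u v) s (hs : ∑ k, s k = 0)
          (hs : ∑ k, s k = 0)
        have heq := reach_congr G (σ := σ * Equiv.swap v w * Equiv.swap u v * Equiv.swap v w)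
          (τ := σ * Equiv.swap u w) (by rw [← key]; group) rfl
          (hs : ∑ k, s k = 0) hs'
        exact ((r1.trans r2).trans r3).trans heq

end EtaAux

namespace EtaAux

open Equiv SimpleGraph

variable {n : ℕ} (G : SimpleGraph (Fin n))

/-- walk ⇒ reach (σ,s) to (σ, flip i j s) -/
lemma reach_flip {i j : Fin n} (p : G.Walk i j) :
    ∀ (σ : Equiv.Perm (Fin n)) (s : Fin n → ZMod 2) (hs : (σ, s) ∈ S n)
      (hs' : (σ, flip i j s) ∈ S n),
      (H G).Reachable ⟨(σ, s), hs⟩ ⟨(σ, flip i j s), hs'⟩ := by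
  induction p with
  | nil =>
    intro σ s hs hs'
    exact (reach_congr G rfl (flip_self _ s) hs' hs).symm
  | @cons u v w h p ih =>
    intro σ s hs hs'
    have hf : ∑ k, flip u v s k = 0 := sum_flip u v s hs
    have r1 := reach_edge_flip G σ s hs h hf
    have r2 := (reach_edge G σ (flip u v s) hf h hf).symm
    have r3 := ih σ (flip u v s) hf (by rw [flip_flip]; exact hs')
    have heq := reach_congr G (σ := σ) rfl (flip_flip u v w s)
      (by rw [flip_flip]; exact hs') hs'
    exact ((r1.trans r2).trans r3).trans heq

lemma zero_mem (σ : Equiv.Perm (Fin n)) : (σ, (0 : Fin n → ZMod 2)) ∈ S n := by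
  simp [S]

lemma zmod2_ne_zero : ∀ {a : ZMod 2}, a ≠ 0 → a = 1 := by decide

/-- kill the sign vector -/
lemma reach_zero (hG : G.Connected) (σ : Equiv.Perm (Fin n)) :
    ∀ (m : ℕ) (s : Fin n → ZMod 2) (hs : (σ, s) ∈ S n),
      (Finset.univ.filter (fun k => s k ≠ 0)).card ≤ m →
      (H G).Reachable ⟨(σ, s), hs⟩ ⟨(σ, 0), zero_mem σ⟩ := by
  intro m
  induction m with
  | zero =>
    intro s hs hcard
    have hzero : s = 0 := by
      funext k
      by_contra hk
      simp only [Pi.zero_apply] at hk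
      have hmem : k ∈ Finset.univ.filter (fun k => s k ≠ 0) := by simp [hk]
      have := Finset.card_pos.mpr ⟨k, hmem⟩
      omega
    subst hzero
    rfl
  | succ m ih =>
    intro s hs hcard
    by_cases hzero : s = 0
    · subst hzero; rfl
    · obtain ⟨i, hi⟩ : ∃ i, s i ≠ 0 := by
        by_contra hc
        push_neg at hc
        exact hzero (funext fun k => hc k)
      obtain ⟨j, hji, hj⟩ : ∃ j, j ≠ i ∧ s j ≠ 0 := by
        by_contra hc
        push_neg at hc
        have hsum : ∑ k, s k = s i := by
          rw [← Finset.add_sum_erase _ _ (Finset.mem_univ i)]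
          rw [Finset.sum_eq_zero, add_zero]
          intro k hk
          exact hc k (Finset.ne_of_mem_erase hk)
        exact hi (by rw [← hsum]; exact hs)
      have hij : i ≠ j := hji.symm
      set s' := flip i j s with hs'def
      have hs' : (σ, s') ∈ S n := sum_flip i j s hs
      have hval_i : s' i = 0 := by
        simp only [hs'def, flip, Pi.add_apply, Pi.single_eq_same,
          Pi.single_eq_of_ne hij, zmod2_ne_zero hi]
        decide
      have hval_j : s' j = 0 := by
        simp only [hs'def, flip, Pi.add_apply, Pi.single_eq_same,
          Pi.single_eq_of_ne hji, zmod2_ne_zero hj]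
        decide
      have hval : ∀ k, k ≠ i → k ≠ j → s' k = s k := by
        intro k hk1 hk2
        simp [hs'def, flip, Pi.single_eq_of_ne hk1, Pi.single_eq_of_ne hk2]
      have hsub : Finset.univ.filter (fun k => s' k ≠ 0) ⊆
          (Finset.univ.filter (fun k => s k ≠ 0)).erase i := by
        intro k hk
        simp only [Finset.mem_filter, Finset.mem_univ, true_and] at hk
        rcases eq_or_ne k i with rfl | hki
        · exact absurd hval_i hk
        rcases eq_or_ne k j with rfl | hkj
        · exact absurd hval_j hk
        exact Finset.mem_erase.mpr ⟨hki, by simp [hval k hki hkj] at hk ⊢; exact hk⟩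
      have hle : (Finset.univ.filter (fun k => s' k ≠ 0)).card ≤ m := by
        have h1 := Finset.card_le_card hsub
        have hi_mem : i ∈ Finset.univ.filter (fun k => s k ≠ 0) := by simp [hi]
        have h2 := Finset.card_erase_of_mem hi_mem
        have h3 := Finset.card_pos.mpr ⟨i, hi_mem⟩
        omega
      have r1 : (H G).Reachable ⟨(σ, s), hs⟩ ⟨(σ, s'), hs'⟩ :=
        (hG i j).elim fun p => reach_flip G p σ s hs hs'
      exact r1.trans (ih s' hs' hle)

/-- reach the identity permutation -/
lemma reach_one (hG : G.Connected) (σ : Equiv.Perm (Fin n)) :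
    (H G).Reachable ⟨(σ, 0), zero_mem σ⟩ ⟨((1 : Equiv.Perm (Fin n)), 0), zero_mem 1⟩ := by
  refine Equiv.Perm.swap_induction_on'
    (motive := fun τ => (H G).Reachable ⟨(τ, 0), zero_mem τ⟩
      ⟨((1 : Equiv.Perm (Fin n)), 0), zero_mem 1⟩) σ
    (SimpleGraph.Reachable.refl _) ?_
  intro f x y hxy hf
  · have r1 : (H G).Reachable ⟨(f * Equiv.swap x y, 0), zero_mem _⟩
        ⟨(f * Equiv.swap x y * Equiv.swap x y, 0), zero_mem _⟩ :=
      (hG x y).elim fun p =>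
        reach_swap G p (f * Equiv.swap x y) 0 (zero_mem _) (zero_mem _)
    have heq := reach_congr G (σ := f * Equiv.swap x y * Equiv.swap x y) (τ := f)
      (by rw [mul_assoc, Equiv.swap_mul_self, mul_one]) rfl (zero_mem _) (zero_mem f)
    exact (r1.trans heq).trans hf

end EtaAux

/-- If `Γ` is connected, then the subgraph of `η` induced on the vertices of parity 0
(the GKM graph of `Q⁺_{Γ,λ}`) is connected. -/
theorem eta_plus_connected (n : ℕ) (G : SimpleGraph (Fin n)) (hG : G.Connected) :
    ((SimpleGraph.fromRel (etaAdj G)).induce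
      {v : Equiv.Perm (Fin n) × (Fin n → ZMod 2) | ∑ k, v.2 k = 0}).Connected := by
  show (EtaAux.H G).Connected
  have key : ∀ w : EtaAux.S n, (EtaAux.H G).Reachable w
      ⟨((1 : Equiv.Perm (Fin n)), 0), EtaAux.zero_mem 1⟩ := by
    rintro ⟨⟨σ, s⟩, hs⟩
    exact (EtaAux.reach_zero G hG σ _ s hs le_rfl).trans (EtaAux.reach_one G hG σ)
  rw [SimpleGraph.connected_iff]
  exact ⟨fun u v => (key u).trans (key v).symm, ⟨⟨(1, 0), EtaAux.zero_mem 1⟩⟩⟩
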